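/- Let c_{i,j} be defined by the square-lattice Green's-function integral. Then for all integers j > i ≥ 1, c_{i,j} = 4·c_{i,j−1} − c_{i,j−2} − c_{i−1,j−1} − c_{i+1,j−1}. -/

import Mathlib

open Real MeasureTheory Complex Set

noncomputable def uu (τ : ℝ) : ℂ := ((τ:ℂ) - Complex.I) / ((τ:ℂ) + Complex.I)
noncomputable def vv (τ : ℝ) : ℂ := ((τ:ℂ) - 1) / ((τ:ℂ) + 1)

noncomputable def Complex.abs : AbsoluteValue ℂ ℝ :=
  IsAbsoluteValue.toAbsoluteValue (norm : ℂ → ℝ)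

lemma Complex.abs_apply (z : ℂ) : Complex.abs z = Real.sqrt (Complex.normSq z) :=
  Complex.norm_def z

lemma Complex.norm_eq_abs (z : ℂ) : ‖z‖ = Complex.abs z := rfl

@[simp] lemma Complex.abs_ofReal (r : ℝ) : Complex.abs (r : ℂ) = |r| :=
  show ‖(r : ℂ)‖ = |r| by simp

@[simp] lemma Complex.abs_two : Complex.abs (2 : ℂ) = 2 := show ‖(2 : ℂ)‖ = 2 by simp

@[simp] lemma Complex.abs_I : Complex.abs Complex.I = 1 := show ‖Complex.I‖ = 1 by simp

lemma den1_ne (τ : ℝ) : (τ:ℂ) + Complex.I ≠ 0 := by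
  intro h; have := congrArg Complex.im h; simp at this

lemma num1_ne (τ : ℝ) : (τ:ℂ) - Complex.I ≠ 0 := by
  intro h; have := congrArg Complex.im h; simp at this

lemma den2_ne {τ : ℝ} (hτ : 0 < τ) : (τ:ℂ) + 1 ≠ 0 := by
  intro h; have := congrArg Complex.re h; simp at this; linarith

lemma uu_ne (τ : ℝ) : uu τ ≠ 0 := div_ne_zero (num1_ne τ) (den1_ne τ)

lemma abs_den1 (τ : ℝ) : Complex.abs ((τ:ℂ) + Complex.I) = Real.sqrt (τ^2 + 1) := by
  rw [Complex.abs_apply]; congr 1; simp [Complex.normSq_apply]; ring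

lemma abs_uu (τ : ℝ) : Complex.abs (uu τ) = 1 := by
  rw [uu, map_div₀]
  rw [div_eq_one_iff_eq (by simp [abs_den1]; positivity)]
  rw [abs_den1, Complex.abs_apply]; congr 1; simp [Complex.normSq_apply]; ring

lemma abs_vv {τ : ℝ} (hτ : 0 < τ) : Complex.abs (vv τ) ≤ 1 := by
  rw [vv, map_div₀]
  have h1 : ((τ:ℂ) - 1) = ((τ - 1 : ℝ) : ℂ) := by push_cast; ring
  have h2 : ((τ:ℂ) + 1) = ((τ + 1 : ℝ) : ℂ) := by push_cast; ring
  rw [h1, h2, Complex.abs_ofReal, Complex.abs_ofReal]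
  rw [abs_of_pos (by linarith : (0:ℝ) < τ + 1), div_le_one (by linarith), abs_le]
  constructor <;> linarith

lemma abs_one_sub_pow_le (w : ℂ) (h : Complex.abs w ≤ 1) (n : ℕ) :
    Complex.abs (1 - w ^ n) ≤ n * Complex.abs (1 - w) := by
  induction n with
  | zero => simp
  | succ n ih =>
      have hid : 1 - w ^ (n+1) = (1 - w ^ n) + w ^ n * (1 - w) := by ring
      rw [hid]
      calc Complex.abs ((1 - w ^ n) + w ^ n * (1 - w))
          ≤ Complex.abs (1 - w ^ n) + Complex.abs (w ^ n * (1 - w)) := by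
            exact Complex.abs.add_le _ _
        _ ≤ n * Complex.abs (1 - w) + 1 * Complex.abs (1 - w) := by
            refine add_le_add ih ?_
            rw [map_mul, map_pow]
            exact mul_le_mul_of_nonneg_right
              (pow_le_one₀ (Complex.abs.nonneg _) h) (Complex.abs.nonneg _)
        _ = (n + 1 : ℕ) * Complex.abs (1 - w) := by push_cast; ring

lemma abs_one_sub_zpow_le (w : ℂ) (h : Complex.abs w = 1) (n : ℤ) :
    Complex.abs (1 - w ^ n) ≤ |n| * Complex.abs (1 - w) := by
  have hw0 : w ≠ 0 := by intro h0; rw [h0] at h; simp at h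
  rcases le_or_gt 0 n with hn | hn
  · obtain ⟨m, rfl⟩ := Int.eq_ofNat_of_zero_le hn
    rw [zpow_natCast]
    calc Complex.abs (1 - w ^ m) ≤ m * Complex.abs (1 - w) :=
          abs_one_sub_pow_le w h.le m
      _ = |(m:ℤ)| * Complex.abs (1 - w) := by simp
  · obtain ⟨m, rfl⟩ : ∃ m : ℕ, n = -(m:ℤ) :=
      ⟨n.natAbs, by omega⟩
    have : (1 : ℂ) - w ^ (-(m:ℤ)) = (w ^ m - 1) / w ^ m := by
      rw [zpow_neg, zpow_natCast]
      field_simp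
    rw [this, map_div₀, map_pow, h, one_pow, div_one]
    calc Complex.abs (w ^ m - 1) = Complex.abs (1 - w ^ m) := by
          rw [← Complex.abs.map_neg]; ring_nf
      _ ≤ m * Complex.abs (1 - w) := abs_one_sub_pow_le w h.le m
      _ = |(-(m:ℤ))| * Complex.abs (1 - w) := by simp

lemma abs_one_sub_mul_le (u v : ℂ) (hu : Complex.abs u = 1) (hv : Complex.abs v ≤ 1)
    (a : ℤ) (b : ℕ) :
    Complex.abs (1 - u ^ a * v ^ b) ≤
      |a| * Complex.abs (1 - u) + b * Complex.abs (1 - v) := by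
  have hid : 1 - u ^ a * v ^ b = (1 - u ^ a) + u ^ a * (1 - v ^ b) := by ring
  rw [hid]
  calc Complex.abs ((1 - u ^ a) + u ^ a * (1 - v ^ b))
      ≤ Complex.abs (1 - u ^ a) + Complex.abs (u ^ a * (1 - v ^ b)) :=
        Complex.abs.add_le _ _
    _ ≤ |a| * Complex.abs (1 - u) + b * Complex.abs (1 - v) := by
        rw [map_mul, map_zpow₀, hu, one_zpow, one_mul]
        gcongr
        · exact abs_one_sub_zpow_le u hu a
        · exact abs_one_sub_pow_le v hv b

lemma sqrt_ge_self {τ : ℝ} (hτ : 0 < τ) : τ ≤ Real.sqrt (τ^2 + 1) := by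
  have : τ = Real.sqrt (τ^2) := by rw [Real.sqrt_sq hτ.le]
  rw [this]; exact Real.sqrt_le_sqrt (by nlinarith)

lemma sqrt_ge_one (τ : ℝ) : 1 ≤ Real.sqrt (τ^2 + 1) := by
  have : (1:ℝ) = Real.sqrt 1 := by simp
  rw [this]; exact Real.sqrt_le_sqrt (by nlinarith)

lemma abs_one_sub_uu {τ : ℝ} (hτ : 0 < τ) : Complex.abs (1 - uu τ) ≤ 2 / τ := by
  have h : 1 - uu τ = 2 * Complex.I / ((τ:ℂ) + Complex.I) := by
    rw [uu, eq_div_iff (den1_ne τ), sub_mul, div_mul_cancel₀ _ (den1_ne τ)]; ring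
  rw [h, map_div₀, abs_den1]
  simp only [map_mul, Complex.abs_two, Complex.abs_I, mul_one]
  exact div_le_div_of_nonneg_left (by norm_num) hτ (sqrt_ge_self hτ)

lemma abs_one_add_uu {τ : ℝ} (hτ : 0 < τ) : Complex.abs (1 - (- uu τ)) ≤ 2 * τ := by
  have h : 1 - (- uu τ) = 2 * (τ:ℂ) / ((τ:ℂ) + Complex.I) := by
    rw [uu, sub_neg_eq_add, eq_div_iff (den1_ne τ), add_mul, div_mul_cancel₀ _ (den1_ne τ)]; ring
  rw [h, map_div₀, abs_den1]
  simp only [map_mul, Complex.abs_two, Complex.abs_ofReal, abs_of_pos hτ]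
  rw [div_le_iff₀ (by positivity)]
  nlinarith [sqrt_ge_one τ]

lemma abs_one_sub_vv {τ : ℝ} (hτ : 0 < τ) : Complex.abs (1 - vv τ) ≤ 2 / τ := by
  have h : 1 - vv τ = 2 / ((τ:ℂ) + 1) := by
    rw [vv, eq_div_iff (den2_ne hτ), sub_mul, div_mul_cancel₀ _ (den2_ne hτ)]; ring
  have h2 : ((τ:ℂ) + 1) = ((τ + 1 : ℝ) : ℂ) := by push_cast; ring
  rw [h, h2, map_div₀, Complex.abs_two, Complex.abs_ofReal, abs_of_pos (by linarith)]
  exact div_le_div_of_nonneg_left (by norm_num) hτ (by linarith)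

lemma abs_one_add_vv {τ : ℝ} (hτ : 0 < τ) : Complex.abs (1 - (- vv τ)) ≤ 2 * τ := by
  have h : 1 - (- vv τ) = 2 * (τ:ℂ) / ((τ:ℂ) + 1) := by
    rw [vv, sub_neg_eq_add, eq_div_iff (den2_ne hτ), add_mul, div_mul_cancel₀ _ (den2_ne hτ)]; ring
  have h2 : ((τ:ℂ) + 1) = ((τ + 1 : ℝ) : ℂ) := by push_cast; ring
  rw [h, h2, map_div₀]
  simp only [map_mul, Complex.abs_two, Complex.abs_ofReal,
    abs_of_pos hτ, abs_of_pos (show (0:ℝ) < τ + 1 by linarith)]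
  rw [div_le_iff₀ (by linarith)]
  nlinarith

lemma parity_swap (τ : ℝ) (a : ℤ) (b : ℕ) (hab : Even (a + (b:ℤ))) :
    uu τ ^ a * vv τ ^ b = (-uu τ) ^ a * (-vv τ) ^ b := by
  rw [show -uu τ = (-1) * uu τ by ring, show -vv τ = (-1) * vv τ by ring,
      mul_zpow, mul_pow]
  have h1 : ((-1:ℂ)) ^ a * ((-1:ℂ)) ^ b = 1 := by
    rw [show ((-1:ℂ)) ^ b = ((-1:ℂ)) ^ (b:ℤ) from (zpow_natCast _ b).symm,
      ← zpow_add₀ (by norm_num : (-1:ℂ) ≠ 0), Even.neg_one_zpow hab]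
  rw [mul_mul_mul_comm, h1, one_mul]

lemma norm_F_le {τ : ℝ} (hτ : 0 < τ) (a : ℤ) (b : ℕ) (hab : Even (a + (b:ℤ))) :
    ‖(1/(τ:ℂ)) * (1 - uu τ ^ a * vv τ ^ b)‖ ≤ 2 * (|(a:ℝ)| + b) := by
  rw [norm_mul, Complex.norm_eq_abs, Complex.norm_eq_abs]
  have h1 : Complex.abs (1/(τ:ℂ)) = 1/τ := by
    rw [map_div₀, map_one, Complex.abs_ofReal, abs_of_pos hτ]
  rw [h1, parity_swap τ a b hab, one_div, inv_mul_le_iff₀ hτ]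
  have h2 := abs_one_sub_mul_le (-uu τ) (-vv τ)
    (by rw [Complex.abs.map_neg]; exact abs_uu τ)
    (by rw [Complex.abs.map_neg]; exact abs_vv hτ) a b
  push_cast at h2
  have h3 := abs_one_add_uu hτ
  have h4 := abs_one_add_vv hτ
  have ha0 : (0:ℝ) ≤ |(a:ℝ)| := abs_nonneg _
  have hb0 : (0:ℝ) ≤ (b : ℝ) := by positivity
  have p3 : |(a:ℝ)| * Complex.abs (1 - -uu τ) ≤ |(a:ℝ)| * (2*τ) :=
    mul_le_mul_of_nonneg_left h3 ha0
  have p4 : (b:ℝ) * Complex.abs (1 - -vv τ) ≤ (b:ℝ) * (2*τ) :=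
    mul_le_mul_of_nonneg_left h4 hb0
  nlinarith [h2, p3, p4]

lemma norm_F_le' {τ : ℝ} (hτ : 0 < τ) (a : ℤ) (b : ℕ) :
    ‖(1/(τ:ℂ)) * (1 - uu τ ^ a * vv τ ^ b)‖ ≤ 2 * (|(a:ℝ)| + b) / τ^2 := by
  rw [norm_mul, Complex.norm_eq_abs, Complex.norm_eq_abs]
  have h1 : Complex.abs (1/(τ:ℂ)) = 1/τ := by
    rw [map_div₀, map_one, Complex.abs_ofReal, abs_of_pos hτ]
  have h2 := abs_one_sub_mul_le (uu τ) (vv τ) (abs_uu τ) (abs_vv hτ) a b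
  push_cast at h2
  have h3 := abs_one_sub_uu hτ
  have h4 := abs_one_sub_vv hτ
  have ha0 : (0:ℝ) ≤ |(a:ℝ)| := abs_nonneg _
  have hb0 : (0:ℝ) ≤ (b : ℝ) := by positivity
  have key : Complex.abs (1 - uu τ ^ a * vv τ ^ b) ≤ 2 * (|(a:ℝ)| + b) / τ :=
    calc Complex.abs (1 - uu τ ^ a * vv τ ^ b)
        ≤ |(a:ℝ)| * Complex.abs (1 - uu τ) + b * Complex.abs (1 - vv τ) := h2
      _ ≤ |(a:ℝ)| * (2/τ) + b * (2/τ) :=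
          add_le_add (mul_le_mul_of_nonneg_left h3 ha0)
            (mul_le_mul_of_nonneg_left h4 hb0)
      _ = 2 * (|(a:ℝ)| + b) / τ := by ring
  rw [h1]
  calc (1/τ) * Complex.abs (1 - uu τ ^ a * vv τ ^ b)
      ≤ (1/τ) * (2 * (|(a:ℝ)| + b) / τ) :=
        mul_le_mul_of_nonneg_left key (by positivity)
    _ = 2 * (|(a:ℝ)| + b) / τ^2 := by
        rw [div_mul_div_comm, one_mul, ← sq]

lemma continuousOn_F (a : ℤ) (b : ℕ) :
    ContinuousOn (fun τ : ℝ => (1/(τ:ℂ)) * (1 - uu τ ^ a * vv τ ^ b)) (Set.Ioi 0) := by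
  have hu : Continuous uu := by
    unfold uu
    exact (Complex.continuous_ofReal.sub continuous_const).div
      (Complex.continuous_ofReal.add continuous_const) (fun τ => den1_ne τ)
  have hv : ContinuousOn vv (Set.Ioi 0) := by
    unfold vv
    exact ((Complex.continuous_ofReal.sub continuous_const).continuousOn).div
      ((Complex.continuous_ofReal.add continuous_const).continuousOn)
      (fun τ hτ => den2_ne hτ)
  have h1 : ContinuousOn (fun τ : ℝ => 1/(τ:ℂ)) (Set.Ioi 0) :=
    continuousOn_const.div Complex.continuous_ofReal.continuousOn
      (fun x hx => Complex.ofReal_ne_zero.mpr (ne_of_gt hx))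
  exact h1.mul (continuousOn_const.sub
    ((hu.continuousOn.zpow₀ a (fun x _ => Or.inl (uu_ne x))).mul (hv.pow b)))

lemma integrable_F (a : ℤ) (b : ℕ) (hab : Even (a + (b:ℤ))) :
    IntegrableOn (fun τ : ℝ => (1/(τ:ℂ)) * (1 - uu τ ^ a * vv τ ^ b)) (Set.Ioi 0) := by
  rw [show Set.Ioi (0:ℝ) = Set.Ioc 0 1 ∪ Set.Ioi 1 from
    (Set.Ioc_union_Ioi_eq_Ioi zero_le_one).symm]
  refine IntegrableOn.union ?_ ?_
  · refine Integrable.mono' (g := fun _ : ℝ => 2 * (|(a:ℝ)| + b))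
      (integrableOn_const measure_Ioc_lt_top.ne) ?_ ?_
    · exact ((continuousOn_F a b).mono (Set.Ioc_subset_Ioi_self)).aestronglyMeasurable
        measurableSet_Ioc
    · refine (ae_restrict_iff' measurableSet_Ioc).mpr (ae_of_all _ fun x hx => ?_)
      exact norm_F_le hx.1 a b hab
  · refine Integrable.mono'
      (g := fun τ : ℝ => (2 * (|(a:ℝ)| + b)) * τ ^ (-2 : ℝ)) ?_ ?_ ?_
    · exact (integrableOn_Ioi_rpow_of_lt (by norm_num) one_pos).const_mul _
    · exact ((continuousOn_F a b).mono (t := Set.Ioi 1) (fun x hx => lt_trans one_pos hx)).aestronglyMeasurable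
        measurableSet_Ioi
    · refine (ae_restrict_iff' measurableSet_Ioi).mpr (ae_of_all _ fun x hx => ?_)
      have hx1 : (1:ℝ) < x := hx
      have hx0 : (0:ℝ) < x := lt_trans one_pos hx1
      have hrw : x ^ (-2:ℝ) = (x^2)⁻¹ := by
        rw [show (-2:ℝ) = -((2:ℕ):ℝ) by norm_num, Real.rpow_neg hx0.le,
          Real.rpow_natCast]
      show ‖(1/(x:ℂ)) * (1 - uu x ^ a * vv x ^ b)‖ ≤ 2 * (|(a:ℝ)| + b) * x ^ (-2:ℝ)
      rw [hrw]
      calc ‖(1/(x:ℂ)) * (1 - uu x ^ a * vv x ^ b)‖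
          ≤ 2 * (|(a:ℝ)| + b) / x^2 := norm_F_le' hx0 a b
        _ = 2 * (|(a:ℝ)| + b) * (x^2)⁻¹ := by ring

lemma key_identity {τ : ℝ} (hτ : 0 < τ) :
    ((uu τ)^2 + 1) * ((vv τ)^2 + 1) = 4 * uu τ * vv τ := by
  have h1 := den1_ne τ
  have h2 := den2_ne hτ
  rw [uu, vv]
  field_simp
  linear_combination (8*(τ:ℂ)^2) * Complex.I_sq

lemma pow_identity {τ : ℝ} (hτ : 0 < τ) (a : ℤ) (c : ℕ) :
    uu τ ^ a * vv τ ^ (c+3) =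
      4 * (uu τ ^ (a+1) * vv τ ^ (c+2)) - uu τ ^ (a+2) * vv τ ^ (c+1)
        - uu τ ^ a * vv τ ^ (c+1) - uu τ ^ (a+2) * vv τ ^ (c+3) := by
  have hu0 := uu_ne τ
  have hkey := key_identity hτ
  rw [zpow_add₀ hu0 a 1, zpow_add₀ hu0 a 2, zpow_one,
    show (2:ℤ) = ((2:ℕ):ℤ) from rfl, zpow_natCast]
  linear_combination (uu τ ^ a * vv τ ^ (c+1)) * hkey

noncomputable def G (a : ℤ) (b : ℕ) : ℂ :=
  ∫ τ in Set.Ioi (0:ℝ), (1/(τ:ℂ)) * (1 - uu τ ^ a * vv τ ^ b)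

lemma G_rec (a : ℤ) (c : ℕ) (hab : Even (a + (c:ℤ) + 3)) :
    G a (c+3) = 4 * G (a+1) (c+2) - G (a+2) (c+1) - G a (c+1) - G (a+2) (c+3) := by
  obtain ⟨k, hk⟩ := hab
  have h1 := integrable_F (a+1) (c+2) ⟨k, by push_cast; omega⟩
  have h2 := integrable_F (a+2) (c+1) ⟨k, by push_cast; omega⟩
  have h3 := integrable_F a (c+1) ⟨k - 1, by push_cast; omega⟩
  have h4 := integrable_F (a+2) (c+3) ⟨k + 1, by push_cast; omega⟩
  have H1 : Integrable (fun τ : ℝ =>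
      4 * ((1/(τ:ℂ)) * (1 - uu τ ^ (a+1) * vv τ ^ (c+2))))
      (volume.restrict (Set.Ioi (0:ℝ))) := h1.const_mul 4
  have H2 : Integrable (fun τ : ℝ =>
      4 * ((1/(τ:ℂ)) * (1 - uu τ ^ (a+1) * vv τ ^ (c+2)))
        - (1/(τ:ℂ)) * (1 - uu τ ^ (a+2) * vv τ ^ (c+1)))
      (volume.restrict (Set.Ioi (0:ℝ))) := H1.sub h2
  have H3 : Integrable (fun τ : ℝ =>
      4 * ((1/(τ:ℂ)) * (1 - uu τ ^ (a+1) * vv τ ^ (c+2)))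
        - (1/(τ:ℂ)) * (1 - uu τ ^ (a+2) * vv τ ^ (c+1))
        - (1/(τ:ℂ)) * (1 - uu τ ^ a * vv τ ^ (c+1)))
      (volume.restrict (Set.Ioi (0:ℝ))) := H2.sub h3
  have hfun : ∀ τ ∈ Set.Ioi (0:ℝ),
      (1/(τ:ℂ)) * (1 - uu τ ^ a * vv τ ^ (c+3)) =
        4 * ((1/(τ:ℂ)) * (1 - uu τ ^ (a+1) * vv τ ^ (c+2)))
          - (1/(τ:ℂ)) * (1 - uu τ ^ (a+2) * vv τ ^ (c+1))
          - (1/(τ:ℂ)) * (1 - uu τ ^ a * vv τ ^ (c+1))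
          - (1/(τ:ℂ)) * (1 - uu τ ^ (a+2) * vv τ ^ (c+3)) := by
    intro τ hτ
    linear_combination (-(1/(τ:ℂ))) * pow_identity (Set.mem_Ioi.mp hτ) a c
  calc G a (c+3)
      = ∫ τ in Set.Ioi (0:ℝ),
          (4 * ((1/(τ:ℂ)) * (1 - uu τ ^ (a+1) * vv τ ^ (c+2)))
            - (1/(τ:ℂ)) * (1 - uu τ ^ (a+2) * vv τ ^ (c+1))
            - (1/(τ:ℂ)) * (1 - uu τ ^ a * vv τ ^ (c+1))
            - (1/(τ:ℂ)) * (1 - uu τ ^ (a+2) * vv τ ^ (c+3))) := by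
        rw [G]
        exact setIntegral_congr_fun measurableSet_Ioi hfun
    _ = 4 * G (a+1) (c+2) - G (a+2) (c+1) - G a (c+1) - G (a+2) (c+3) := by
        rw [integral_sub H3 h4, integral_sub H2 h3, integral_sub H1 h2,
          integral_const_mul]
        rfl

/-- The square-lattice Green's-function coefficient
`c_{i,j} = -(1/π) ∫_0^∞ (1/τ)(1 - ((τ-i)/(τ+i))^{i-j}((τ-1)/(τ+1))^{i+j}) dτ`,
equal to the entry `C_{O,(i,j)}` of the matrix `C` of the infinite square lattice. -/
noncomputable def squareGreen (i j : ℕ) : ℂ :=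
  -(1 / (π : ℂ)) * ∫ τ in Set.Ioi (0:ℝ),
    (1 / (τ : ℂ)) * (1 - (((τ : ℂ) - Complex.I) / ((τ : ℂ) + Complex.I)) ^ ((i : ℤ) - (j : ℤ))
      * (((τ : ℂ) - 1) / ((τ : ℂ) + 1)) ^ ((i : ℤ) + (j : ℤ)))

lemma squareGreen_eq (i j : ℕ) :
    squareGreen i j = -(1/(π:ℂ)) * G ((i:ℤ) - (j:ℤ)) (i+j) := by
  rw [squareGreen, G]
  congr 1

theorem squareGreen_interior_recurrence :
    ∀ i j : ℕ, 1 ≤ i → i < j →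
      squareGreen i j =
        4 * squareGreen i (j - 1) - squareGreen i (j - 2)
          - squareGreen (i - 1) (j - 1) - squareGreen (i + 1) (j - 1) := by
  intro i j hi hij
  obtain ⟨c, hc⟩ : ∃ c, i + j = c + 3 := ⟨i + j - 3, by omega⟩
  have hc' : (i:ℤ) + (j:ℤ) = (c:ℤ) + 3 := by exact_mod_cast hc
  have e0 : squareGreen i j = -(1/(π:ℂ)) * G ((i:ℤ) - (j:ℤ)) (c+3) := by
    rw [squareGreen_eq, hc]
  have e1 : squareGreen i (j-1) = -(1/(π:ℂ)) * G (((i:ℤ) - (j:ℤ)) + 1) (c+2) := by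
    rw [squareGreen_eq, show i + (j-1) = c + 2 from by omega,
      show (i:ℤ) - ((j-1:ℕ):ℤ) = ((i:ℤ)-(j:ℤ)) + 1 from by
        push_cast [Nat.cast_sub (show 1 ≤ j by omega)]; ring]
  have e2 : squareGreen i (j-2) = -(1/(π:ℂ)) * G (((i:ℤ) - (j:ℤ)) + 2) (c+1) := by
    rw [squareGreen_eq, show i + (j-2) = c + 1 from by omega,
      show (i:ℤ) - ((j-2:ℕ):ℤ) = ((i:ℤ)-(j:ℤ)) + 2 from by
        push_cast [Nat.cast_sub (show 2 ≤ j by omega)]; ring]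
  have e3 : squareGreen (i-1) (j-1) = -(1/(π:ℂ)) * G ((i:ℤ) - (j:ℤ)) (c+1) := by
    rw [squareGreen_eq, show (i-1) + (j-1) = c + 1 from by omega,
      show ((i-1:ℕ):ℤ) - ((j-1:ℕ):ℤ) = ((i:ℤ)-(j:ℤ)) from by
        push_cast [Nat.cast_sub (show 1 ≤ j by omega), Nat.cast_sub hi]; ring]
  have e4 : squareGreen (i+1) (j-1) = -(1/(π:ℂ)) * G (((i:ℤ) - (j:ℤ)) + 2) (c+3) := by
    rw [squareGreen_eq, show (i+1) + (j-1) = c + 3 from by omega,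
      show ((i+1:ℕ):ℤ) - ((j-1:ℕ):ℤ) = ((i:ℤ)-(j:ℤ)) + 2 from by
        push_cast [Nat.cast_sub (show 1 ≤ j by omega)]; ring]
  rw [e0, e1, e2, e3, e4, G_rec ((i:ℤ) - (j:ℤ)) c ⟨(i:ℤ), by omega⟩]
  ring
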